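/- Let k ∈ ℕ with k ≥ 1 and let I = { m/k − 1/(2k) : m ∈ {1,…,k} } be the set of midpoints of the k subintervals of [0,1] of length 1/k. Then for every b ∈ I, (1/k)·Σ_{a ∈ I, a ≠ b} (|a − b| − 1/(2k))² ≥ (1/48)·(1 − 1/k²). -/

import Mathlib

open Finset

private lemma sumC (n : ℕ) :
    ∑ i ∈ range n, ((i : ℝ) + 1/2)^2 = (n : ℝ) * (4 * (n:ℝ)^2 - 1) / 12 := by
  induction n with
  | zero => simp
  | succ n ih => rw [Finset.sum_range_succ, ih]; push_cast; ring

private lemma sumB (n : ℕ) :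
    ∑ i ∈ range n, ((i : ℝ) - 1/2)^2 = (n:ℝ) * (4*(n:ℝ)^2 - 12*(n:ℝ) + 11) / 12 := by
  induction n with
  | zero => simp
  | succ n ih => rw [Finset.sum_range_succ, ih]; push_cast; ring

private lemma keyineq (p q : ℕ) :
    ((p:ℝ) + q + 1)^3 - ((p:ℝ) + q + 1) ≤
      4 * ((p:ℝ) * (4*(p:ℝ)^2 - 1) + (q:ℝ) * (4*(q:ℝ)^2 - 1)) := by
  rcases Nat.eq_zero_or_pos p with hp | hp
  · subst hp
    rcases Nat.eq_zero_or_pos q with hq | hq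
    · subst hq; norm_num
    · have h : (1:ℝ) ≤ q := by exact_mod_cast hq
      push_cast
      nlinarith [h, sq_nonneg ((q:ℝ) - 1), mul_nonneg (sub_nonneg.2 h) (sq_nonneg ((q:ℝ) - 1))]
  · rcases Nat.eq_zero_or_pos q with hq | hq
    · subst hq
      have h : (1:ℝ) ≤ p := by exact_mod_cast hp
      push_cast
      nlinarith [h, sq_nonneg ((p:ℝ) - 1), mul_nonneg (sub_nonneg.2 h) (sq_nonneg ((p:ℝ) - 1))]
    · have h1 : (1:ℝ) ≤ p := by exact_mod_cast hp
      have h2 : (1:ℝ) ≤ q := by exact_mod_cast hq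
      nlinarith [sq_nonneg ((p:ℝ) - (q:ℝ)),
        mul_nonneg (sub_nonneg.2 h1) (sub_nonneg.2 h2),
        mul_nonneg (mul_nonneg (sub_nonneg.2 h1) (sub_nonneg.2 h2)) (by linarith : (0:ℝ) ≤ (p:ℝ)+(q:ℝ)),
        mul_nonneg (sq_nonneg ((p:ℝ) - (q:ℝ))) (by linarith : (0:ℝ) ≤ (p:ℝ)+(q:ℝ)-2)]

theorem stmt4 (k : ℕ) (hk : 1 ≤ k)
    (I : Finset ℝ) (hI : I = (Finset.Icc 1 k).image fun m : ℕ => (m : ℝ) / k - 1 / (2 * k))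
    (b : ℝ) (hb : b ∈ I) :
    (1 / 48) * (1 - 1 / (k : ℝ) ^ 2)
      ≤ (1 / (k : ℝ)) * ∑ a ∈ I.erase b, (|a - b| - 1 / (2 * k)) ^ 2 := by
  have hk0 : (0:ℝ) < (k:ℝ) := by exact_mod_cast hk
  have hkne : (k:ℝ) ≠ 0 := ne_of_gt hk0
  subst hI
  rw [Finset.mem_image] at hb
  obtain ⟨j, hjmem, rfl⟩ := hb
  rw [Finset.mem_Icc] at hjmem
  obtain ⟨hj1, hjk⟩ := hjmem
  have hinj : Function.Injective (fun m : ℕ => (m:ℝ)/k - 1/(2*k)) := by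
    intro a b h
    simp only [sub_left_inj] at h
    rw [div_eq_div_iff hkne hkne] at h
    exact_mod_cast mul_right_cancel₀ hkne h
  rw [← Finset.image_erase hinj, Finset.sum_image (fun a _ b _ h => hinj h)]
  have hterm : ∀ m ∈ (Finset.Icc 1 k).erase j,
      (|(fun m : ℕ => (m:ℝ)/k - 1/(2*k)) m - ((j:ℝ)/k - 1/(2*k))| - 1/(2*(k:ℝ)))^2
        = (1/(k:ℝ)^2) * (|(m:ℝ) - (j:ℝ)| - 1/2)^2 := by
    intro m _
    simp only
    have h1 : (m:ℝ)/k - 1/(2*k) - ((j:ℝ)/k - 1/(2*k)) = ((m:ℝ) - j)/k := by ring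
    rw [h1, abs_div, abs_of_pos hk0]
    field_simp
  rw [Finset.sum_congr rfl hterm, ← Finset.mul_sum]
  have hc1 : ((j - 1 : ℕ):ℝ) = (j:ℝ) - 1 := by
    push_cast [Nat.cast_sub hj1]; ring
  have hc2 : ((k - j : ℕ):ℝ) = (k:ℝ) - (j:ℝ) := by
    push_cast [Nat.cast_sub hjk]; ring
  -- compute the inner sum
  have hS : (1/4 : ℝ) + ∑ m ∈ (Finset.Icc 1 k).erase j, (|(m:ℝ) - (j:ℝ)| - 1/2)^2
      = ∑ m ∈ Finset.Icc 1 k, (|(m:ℝ) - (j:ℝ)| - 1/2)^2 := by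
    have h := Finset.add_sum_erase (Finset.Icc 1 k)
      (fun m : ℕ => (|(m:ℝ) - (j:ℝ)| - 1/2)^2) (Finset.mem_Icc.2 ⟨hj1, hjk⟩)
    simp only [sub_self, abs_zero, zero_sub] at h
    rw [← h]; norm_num
  have hsplit : ∑ m ∈ Finset.Icc 1 k, (|(m:ℝ) - (j:ℝ)| - 1/2)^2
      = (∑ m ∈ Finset.Ico 1 (j+1), (|(m:ℝ) - (j:ℝ)| - 1/2)^2)
        + ∑ m ∈ Finset.Ico (j+1) (k+1), (|(m:ℝ) - (j:ℝ)| - 1/2)^2 := by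
    rw [← Finset.Ico_add_one_right_eq_Icc,
      ← Finset.sum_Ico_consecutive _ (by omega : 1 ≤ j+1) (by omega : j+1 ≤ k+1)]
  have hS1 : ∑ m ∈ Finset.Ico 1 (j+1), (|(m:ℝ) - (j:ℝ)| - 1/2)^2
      = (j:ℝ) * (4*(j:ℝ)^2 - 12*(j:ℝ) + 11) / 12 := by
    rw [Finset.sum_Ico_eq_sum_range]
    simp only [Nat.add_sub_cancel]
    rw [← sumB j, ← Finset.sum_range_reflect (fun i => ((i:ℝ) - 1/2)^2) j]
    apply Finset.sum_congr rfl
    intro i hi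
    rw [Finset.mem_range] at hi
    have h1 : ((j - 1 - i : ℕ):ℝ) = (j:ℝ) - 1 - (i:ℝ) := by
      push_cast [Nat.cast_sub (by omega : 1 ≤ j), Nat.cast_sub (by omega : i ≤ j - 1)]
      ring
    have h2 : |((1 + i : ℕ):ℝ) - (j:ℝ)| = (j:ℝ) - 1 - (i:ℝ) := by
      rw [abs_sub_comm, abs_of_nonneg]
      · push_cast; ring
      · push_cast
        have : (i:ℝ) + 1 ≤ (j:ℝ) := by exact_mod_cast (by omega : i + 1 ≤ j)
        linarith
    rw [h1, h2]
  have hS2 : ∑ m ∈ Finset.Ico (j+1) (k+1), (|(m:ℝ) - (j:ℝ)| - 1/2)^2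
      = ((k:ℝ) - (j:ℝ)) * (4*((k:ℝ) - (j:ℝ))^2 - 1) / 12 := by
    rw [Finset.sum_Ico_eq_sum_range, show k + 1 - (j+1) = k - j from by omega,
      ← hc2, ← sumC (k - j)]
    apply Finset.sum_congr rfl
    intro i hi
    have h2 : |((j + 1 + i : ℕ):ℝ) - (j:ℝ)| = (i:ℝ) + 1 := by
      rw [abs_of_nonneg]
      · push_cast; ring
      · push_cast; linarith [Nat.cast_nonneg (α := ℝ) i]
    rw [h2]
    ring
  have hsum : ∑ m ∈ (Finset.Icc 1 k).erase j, (|(m:ℝ) - (j:ℝ)| - 1/2)^2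
      = (j:ℝ) * (4*(j:ℝ)^2 - 12*(j:ℝ) + 11) / 12
        + ((k:ℝ) - (j:ℝ)) * (4*((k:ℝ) - (j:ℝ))^2 - 1) / 12 - 1/4 := by
    linarith [hS, hsplit, hS1, hS2]
  rw [hsum]
  -- final numeric inequality
  have key := keyineq (j-1) (k-j)
  rw [hc1, hc2] at key
  have hk3 : (0:ℝ) < (k:ℝ)^3 := by positivity
  have e1 : (1/48 : ℝ) * (1 - 1/(k:ℝ)^2) = ((k:ℝ)^3 - (k:ℝ)) / (48 * (k:ℝ)^3) := by
    field_simp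
  have e2 : (1/(k:ℝ)) * ((1/(k:ℝ)^2) * ((j:ℝ) * (4*(j:ℝ)^2 - 12*(j:ℝ) + 11) / 12
        + ((k:ℝ) - (j:ℝ)) * (4*((k:ℝ) - (j:ℝ))^2 - 1) / 12 - 1/4))
      = ((j:ℝ) * (4*(j:ℝ)^2 - 12*(j:ℝ) + 11) / 12
        + ((k:ℝ) - (j:ℝ)) * (4*((k:ℝ) - (j:ℝ))^2 - 1) / 12 - 1/4) / (k:ℝ)^3 := by
    rw [eq_div_iff (ne_of_gt hk3)]; field_simp
  rw [e1, e2, div_le_div_iff₀ (by positivity) hk3]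
  nlinarith [mul_le_mul_of_nonneg_right key hk3.le]
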